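/- For integers n, t, b, q with q ≥ 2 and n ≥ tb, any vector that is a sum of t b≤-bursts can be written as a sum of at most t pairwise disjoint b≤-bursts; that is, B*_{t,≤b} ⊆ ⋃_{i=0}^t B_{i,≤b}. -/

import Mathlib

open scoped BigOperators

/-- The cyclic interval of length `L` starting at position `i` in `ZMod n`. -/
def cycInt (n : ℕ) (i : ZMod n) (L : ℕ) : Set (ZMod n) :=
  {j | ∃ k : ℕ, k < L ∧ j = i + (k : ZMod n)}

/-- `e` is a burst supported in the cyclic interval starting at `i` of length `L ≤ b`. -/
def BurstAt {G : Type*} [AddCommGroup G] {n : ℕ} (b : ℕ) (e : ZMod n → G)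
    (i : ZMod n) (L : ℕ) : Prop :=
  L ≤ b ∧ ∀ j : ZMod n, e j ≠ 0 → j ∈ cycInt n i L

/-- `e` is a `b≤`-burst: its support lies in a cyclic interval of length at most `b`. -/
def IsBurst {G : Type*} [AddCommGroup G] {n : ℕ} (b : ℕ) (e : ZMod n → G) : Prop :=
  ∃ i L, BurstAt b e i L

/-- `w` is a sum of exactly `t` many `b≤`-bursts. -/
def SumOfBursts {G : Type*} [AddCommGroup G] {n : ℕ} (b t : ℕ) (w : ZMod n → G) : Prop :=
  ∃ l : List (ZMod n → G), l.length = t ∧ (∀ e ∈ l, IsBurst b e) ∧ l.sum = w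

/-- The cyclic burst distance: minimum number of `b≤`-bursts summing to `x - y`. -/
noncomputable def burstDist {G : Type*} [AddCommGroup G] {n : ℕ} (b : ℕ)
    (x y : ZMod n → G) : ℕ :=
  sInf {t | SumOfBursts b t (x - y)}

/-- `w` is a sum of exactly `t` pairwise disjoint `b≤`-bursts (disjoint covering intervals). -/
def SumOfDisjointBursts {G : Type*} [AddCommGroup G] {n : ℕ} (b t : ℕ)
    (w : ZMod n → G) : Prop :=
  ∃ (es : Fin t → ZMod n → G) (ps : Fin t → ZMod n) (Ls : Fin t → ℕ),
    (∀ m, BurstAt b (es m) (ps m) (Ls m)) ∧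
    (∀ m m' : Fin t, m ≠ m' → cycInt n (ps m) (Ls m) ∩ cycInt n (ps m') (Ls m') = ∅) ∧
    ∑ m, es m = w

/-- `B_{≤t,≤b}`: vectors expressible as a sum of at most `t` pairwise disjoint `b≤`-bursts. -/
def BSet (n b t : ℕ) (G : Type*) [AddCommGroup G] : Set (ZMod n → G) :=
  {w | ∃ i ≤ t, SumOfDisjointBursts b i w}

/-- The radius-`t` burst ball around `x`. -/
def burstBall {G : Type*} [AddCommGroup G] {n : ℕ} (b t : ℕ) (x : ZMod n → G) :
    Set (ZMod n → G) :=
  {y | burstDist b x y ≤ t}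

/-- A `(t,b)`-burst-correcting code: radius-`t` burst balls around distinct codewords
are disjoint. -/
def IsBurstCorrecting {G : Type*} [AddCommGroup G] {n : ℕ} (t b : ℕ)
    (C : Set (ZMod n → G)) : Prop :=
  ∀ u ∈ C, ∀ v ∈ C, u ≠ v → burstBall b t u ∩ burstBall b t v = ∅


section Aux

open Classical in
noncomputable def restrictTo {G : Type*} [AddCommGroup G] {n : ℕ} (D : Set (ZMod n))
    (w : ZMod n → G) : ZMod n → G :=
  fun j => if j ∈ D then w j else 0

lemma cover_to_decomp {G : Type*} [AddCommGroup G] {n : ℕ} (b i : ℕ) (w : ZMod n → G)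
    (ps : Fin i → ZMod n) (Ls : Fin i → ℕ) (hL : ∀ m, Ls m ≤ b)
    (hdisj : ∀ m m', m ≠ m' → cycInt n (ps m) (Ls m) ∩ cycInt n (ps m') (Ls m') = ∅)
    (hcov : ∀ j, w j ≠ 0 → ∃ m, j ∈ cycInt n (ps m) (Ls m)) :
    SumOfDisjointBursts b i w := by
  classical
  refine ⟨fun m => restrictTo (cycInt n (ps m) (Ls m)) w, ps, Ls, ?_, hdisj, ?_⟩
  · intro m
    refine ⟨hL m, fun j hj => ?_⟩
    by_contra h
    exact hj (by simp [restrictTo, h])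
  · funext j
    rw [Finset.sum_apply]
    by_cases h : ∃ m, j ∈ cycInt n (ps m) (Ls m)
    · obtain ⟨m0, hm0⟩ := h
      rw [Finset.sum_eq_single_of_mem m0 (Finset.mem_univ _)]
      · simp [restrictTo, hm0]
      · intro m _ hne
        have hj : j ∉ cycInt n (ps m) (Ls m) := by
          intro hj
          have := hdisj m m0 hne
          exact absurd (Set.mem_inter hj hm0) (by simp [this])
        simp [restrictTo, hj]
    · push_neg at h
      have hw : w j = 0 := by
        by_contra hw
        obtain ⟨m, hm⟩ := hcov j hw
        exact h m hm
      simp [restrictTo, hw, h]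

lemma greedy (b : ℕ) (hb : 0 < b) (S : Finset ℕ) :
    ∃ A : Finset ℕ, A ⊆ S ∧ (∀ s ∈ S, ∃ a ∈ A, a ≤ s ∧ s < a + b) ∧
      (∀ a ∈ A, ∀ a' ∈ A, a < a' → a + b ≤ a') := by
  induction S using Finset.strongInductionOn with
  | _ S ih =>
  rcases S.eq_empty_or_nonempty with rfl | hS
  · exact ⟨∅, by simp, by simp, by simp⟩
  · set m := S.min' hS with hm
    have hmS : m ∈ S := S.min'_mem hS
    set S' := S.filter (fun x => m + b ≤ x) with hS'
    have hsub : S' ⊂ S := by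
      refine Finset.filter_ssubset.2 ⟨m, hmS, by omega⟩
    obtain ⟨A', hA'sub, hA'cov, hA'sp⟩ := ih S' hsub
    have hA'b : ∀ a ∈ A', m + b ≤ a ∧ a ∈ S := by
      intro a ha
      have := hA'sub ha
      rw [hS', Finset.mem_filter] at this
      exact ⟨this.2, this.1⟩
    refine ⟨insert m A', ?_, ?_, ?_⟩
    · intro a ha
      rcases Finset.mem_insert.1 ha with rfl | ha
      · exact hmS
      · exact (hA'b a ha).2
    · intro s hs
      by_cases h : s < m + b
      · exact ⟨m, Finset.mem_insert_self _ _, S.min'_le s hs, h⟩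
      · obtain ⟨a, ha, h1, h2⟩ := hA'cov s (by rw [hS', Finset.mem_filter]; exact ⟨hs, by omega⟩)
        exact ⟨a, Finset.mem_insert_of_mem ha, h1, h2⟩
    · intro a ha a' ha' hlt
      rcases Finset.mem_insert.1 ha with rfl | ha
      · rcases Finset.mem_insert.1 ha' with rfl | ha'
        · omega
        · exact (hA'b a' ha').1
      · rcases Finset.mem_insert.1 ha' with rfl | ha'
        · have := (hA'b a ha).1; omega
        · exact hA'sp a ha a' ha' hlt

lemma zmod_cast_inj {n : ℕ} {a c : ℕ} (ha : a < n) (hc : c < n)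
    (h : (a : ZMod n) = (c : ZMod n)) : a = c := by
  have := congrArg ZMod.val h
  rwa [ZMod.val_cast_of_lt ha, ZMod.val_cast_of_lt hc] at this

lemma list_sum_apply {G : Type*} [AddCommGroup G] {n : ℕ}
    (l : List (ZMod n → G)) (j : ZMod n) : l.sum j = (l.map (fun e => e j)).sum := by
  induction l with
  | nil => rfl
  | cons e l ih => simp [List.sum_cons, ih]

end Aux
/-- any sum of t bursts is a sum of at most t pairwise disjoint bursts,
i.e. B*_{t,≤b} ⊆ ⋃_{i=0}^t B_{i,≤b}, provided n ≥ tb. -/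
theorem sum_of_bursts_disjoint_decomposition {G : Type*} [AddCommGroup G] [Fintype G]
    (q n t b : ℕ) (hq : Fintype.card G = q) (hq2 : 2 ≤ q) (hn : t * b ≤ n)
    (w : ZMod n → G) (hw : SumOfBursts b t w) :
    ∃ i ≤ t, SumOfDisjointBursts b i w := by
  classical
  obtain ⟨l, hlen, hbursts, hsum⟩ := hw
  -- trivial cases: t = 0 or b = 0 force w = 0
  by_cases htriv : t = 0 ∨ b = 0
  · have hw0 : w = 0 := by
      rcases htriv with rfl | rfl
      · rw [List.length_eq_zero_iff] at hlen; subst hlen; simpa using hsum.symm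
      · have hz : ∀ e ∈ l, e = (0 : ZMod n → G) := by
          intro e he
          obtain ⟨i0, L, hLb, hsupp⟩ := hbursts e he
          have hL0 : L = 0 := Nat.le_zero.1 hLb
          funext j
          by_contra hj
          obtain ⟨k, hk, -⟩ := hsupp j hj
          omega
        rw [← hsum]
        exact List.sum_eq_zero hz
    refine ⟨0, Nat.zero_le t, cover_to_decomp b 0 w Fin.elim0 Fin.elim0
      (fun m => m.elim0) (fun m => m.elim0) ?_⟩
    intro j hj
    exact absurd (by simp [hw0]) hj
  push_neg at htriv
  obtain ⟨ht, hb⟩ := htriv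
  have ht' : 0 < t := Nat.pos_of_ne_zero ht
  have hb' : 0 < b := Nat.pos_of_ne_zero hb
  have hn0 : 0 < n := lt_of_lt_of_le (by positivity) hn
  haveI : NeZero n := ⟨hn0.ne'⟩
  have hbn : b ≤ n := le_trans (Nat.le_mul_of_pos_left b ht') hn
  -- extract interval data for the t bursts
  set g : Fin t → (ZMod n → G) := fun k => l.get (Fin.cast hlen.symm k) with hg
  have hget : ∀ k : Fin t, IsBurst b (g k) := by
    intro k
    exact hbursts _ (List.get_mem l (Fin.cast hlen.symm k))
  choose ps0 Ls0 hL0 hsupp0 using fun k => hget k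
  -- support of w is covered by the burst intervals
  have hcovw : ∀ j, w j ≠ 0 → ∃ k : Fin t, j ∈ cycInt n (ps0 k) (Ls0 k) := by
    intro j hj
    rw [← hsum, list_sum_apply] at hj
    have : ∃ e ∈ l, e j ≠ 0 := by
      by_contra h
      push_neg at h
      exact hj (List.sum_eq_zero (by
        intro x hx
        obtain ⟨e, he, rfl⟩ := List.mem_map.1 hx
        exact h e he))
    obtain ⟨e, he, hej⟩ := this
    obtain ⟨k0, hk0⟩ := List.mem_iff_get.1 he
    refine ⟨Fin.cast hlen k0, hsupp0 (Fin.cast hlen k0) j ?_⟩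
    rw [show g (Fin.cast hlen k0) = e from hk0]
    exact hej
  by_cases hfull : ∀ p : ZMod n, ∃ k, p ∈ cycInt n (ps0 k) (Ls0 k)
  · -- Case B : the intervals cover everything; then n = t*b and we tile the circle.
    have hcard : n ≤ t * b := by
      have hsub : (Finset.univ : Finset (ZMod n)) ⊆
          Finset.univ.biUnion (fun k : Fin t =>
            (Finset.range (Ls0 k)).image (fun m : ℕ => ps0 k + (m : ZMod n))) := by
        intro j _
        obtain ⟨k, m, hm, hj⟩ := hfull j
        exact Finset.mem_biUnion.2 ⟨k, Finset.mem_univ _,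
          Finset.mem_image.2 ⟨m, Finset.mem_range.2 hm, hj.symm⟩⟩
      have h1 := Finset.card_le_card hsub
      have h2 := Finset.card_biUnion_le (s := (Finset.univ : Finset (Fin t)))
        (t := fun k : Fin t =>
          (Finset.range (Ls0 k)).image (fun m : ℕ => ps0 k + (m : ZMod n)))
      have h3 : ∀ k : Fin t,
          ((Finset.range (Ls0 k)).image (fun m : ℕ => ps0 k + (m : ZMod n))).card ≤ b :=
        fun k => le_trans (Finset.card_image_le.trans (by simp)) (hL0 k)
      have h4 : (Finset.univ.biUnion (fun k : Fin t =>
            (Finset.range (Ls0 k)).image (fun m : ℕ => ps0 k + (m : ZMod n)))).card ≤ t * b := by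
        refine le_trans h2 ?_
        calc ∑ k : Fin t,
              ((Finset.range (Ls0 k)).image (fun m : ℕ => ps0 k + (m : ZMod n))).card
            ≤ ∑ _k : Fin t, b := Finset.sum_le_sum (fun k _ => h3 k)
          _ = t * b := by simp [Finset.sum_const, mul_comm]
      calc n = Fintype.card (ZMod n) := (ZMod.card n).symm
        _ = (Finset.univ : Finset (ZMod n)).card := rfl
        _ ≤ _ := h1
        _ ≤ t * b := h4
    have hntb : n = t * b := le_antisymm hcard hn
    refine ⟨t, le_refl t, cover_to_decomp b t w
      (fun k => ((k.1 * b : ℕ) : ZMod n)) (fun _ => b) (fun _ => le_refl b) ?_ ?_⟩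
    · intro k k' hne
      ext j
      simp only [Set.mem_inter_iff, Set.mem_empty_iff_false, iff_false]
      rintro ⟨⟨r, hr, hj1⟩, ⟨r', hr', hj2⟩⟩
      have h1 : ((k.1 * b + r : ℕ) : ZMod n) = ((k'.1 * b + r' : ℕ) : ZMod n) := by
        rw [Nat.cast_add, Nat.cast_add, ← hj1, ← hj2]
      have h2 : k.1 * b + r < n := by
        rw [hntb]
        calc k.1 * b + r < k.1 * b + b := by omega
          _ = (k.1 + 1) * b := by ring
          _ ≤ t * b := Nat.mul_le_mul_right b k.2
      have h3 : k'.1 * b + r' < n := by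
        rw [hntb]
        calc k'.1 * b + r' < k'.1 * b + b := by omega
          _ = (k'.1 + 1) * b := by ring
          _ ≤ t * b := Nat.mul_le_mul_right b k'.2
      have h4 := zmod_cast_inj h2 h3 h1
      have h5 : k.1 = k'.1 := by
        have e1 : (k.1 * b + r) / b = k.1 := by
          rw [mul_comm, Nat.mul_add_div hb', Nat.div_eq_of_lt hr]
          omega
        have e2 : (k'.1 * b + r') / b = k'.1 := by
          rw [mul_comm, Nat.mul_add_div hb', Nat.div_eq_of_lt hr']
          omega

        rw [← e1, ← e2, h4]
      exact hne (Fin.ext h5)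
    · intro j _
      have hjv : j.val < t * b := by rw [← hntb]; exact ZMod.val_lt j
      have hcast : ((j.val : ℕ) : ZMod n) = j := ZMod.natCast_rightInverse j
      refine ⟨⟨j.val / b, by
        by_contra h
        push_neg at h
        have hA : t * b ≤ (j.val / b) * b := Nat.mul_le_mul_right b h
        have hB := Nat.div_mul_le_self j.val b
        omega⟩, j.val % b, Nat.mod_lt _ hb', ?_⟩
      show j = ((j.val / b * b : ℕ) : ZMod n) + ((j.val % b : ℕ) : ZMod n)
      rw [← Nat.cast_add, Nat.div_add_mod']
      exact hcast.symm
  · -- Case A : some point p is outside all intervals; unroll at p.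
    push_neg at hfull
    obtain ⟨p, hp⟩ := hfull
    set s : Fin t → ℕ := fun k => (ps0 k - p - 1).val with hs
    have hps : ∀ k, ps0 k = p + 1 + ((s k : ℕ) : ZMod n) := by
      intro k
      have : ((s k : ℕ) : ZMod n) = ps0 k - p - 1 := ZMod.natCast_rightInverse _
      rw [this]; ring
    have hsn : ∀ k, s k < n := fun k => ZMod.val_lt _
    have hsL : ∀ k, s k + Ls0 k < n := by
      intro k
      by_contra h
      push_neg at h
      have hm : n - 1 - s k < Ls0 k := by have := hsn k; omega
      refine hp k ⟨n - 1 - s k, hm, ?_⟩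
      rw [hps k]
      have key : (1 : ZMod n) + ((s k : ℕ) : ZMod n) + ((n - 1 - s k : ℕ) : ZMod n)
          = ((n : ℕ) : ZMod n) := by
        have h1 : 1 + s k + (n - 1 - s k) = n := by have := hsn k; omega
        rw [← Nat.cast_one, ← Nat.cast_add, ← Nat.cast_add, h1]
      calc p = p + ((n : ℕ) : ZMod n) := by rw [ZMod.natCast_self, add_zero]
        _ = p + 1 + ((s k : ℕ) : ZMod n) + ((n - 1 - s k : ℕ) : ZMod n) := by
            rw [← key]; ring
    -- unrolling: membership in a burst interval translates to a line interval
    have hunroll : ∀ (k : Fin t) (j : ZMod n), j ∈ cycInt n (ps0 k) (Ls0 k) →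
        s k ≤ (j - p - 1).val ∧ (j - p - 1).val < s k + Ls0 k := by
      intro k j hj
      obtain ⟨m, hm, rfl⟩ := hj
      have : ps0 k + (m : ZMod n) - p - 1 = ((s k + m : ℕ) : ZMod n) := by
        rw [hps k]; push_cast; ring
      rw [this, ZMod.val_cast_of_lt (by have := hsL k; omega)]
      omega
    set Sline : Finset ℕ := (Finset.range n).filter (fun x => w (p + 1 + (x : ZMod n)) ≠ 0)
      with hSline
    have hxval : ∀ x < n, ((p + 1 + (x : ZMod n)) - p - 1).val = x := by
      intro x hx
      have : (p + 1 + (x : ZMod n)) - p - 1 = (x : ZMod n) := by ring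
      rw [this, ZMod.val_cast_of_lt hx]
    have hScov : ∀ x ∈ Sline, ∃ k, s k ≤ x ∧ x < s k + Ls0 k := by
      intro x hx
      rw [hSline, Finset.mem_filter, Finset.mem_range] at hx
      obtain ⟨k, hk⟩ := hcovw _ hx.2
      have := hunroll k _ hk
      rw [hxval x hx.1] at this
      exact ⟨k, this⟩
    obtain ⟨A, hAsub, hAcov, hAsp⟩ := greedy b hb' Sline
    -- each a ∈ A lies in a line interval; injectively, so A.card ≤ t
    have hAint : ∀ a ∈ A, ∃ k, s k ≤ a ∧ a < s k + Ls0 k := fun a ha => hScov a (hAsub ha)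
    have hcardA : A.card ≤ t := by
      choose f hf1 hf2 using hAint
      set F : ℕ → Fin t := fun a => if h : a ∈ A then f a h else Fin.mk 0 ht' with hF
      have hinj : Set.InjOn F A := by
        intro a ha a' ha' hfa
        by_contra hne
        have haF : a ∈ A := ha
        have haF' : a' ∈ A := ha'
        have ea : F a = f a haF := dif_pos haF
        have ea' : F a' = f a' haF' := dif_pos haF'
        rw [ea, ea'] at hfa
        rcases Nat.lt_or_ge a a' with hlt | hge
        · have hsp := hAsp a haF a' haF' hlt
          have h1 := hf1 a haF
          have h2 := hf2 a' haF'
          have h3 := hL0 (f a haF)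
          rw [← hfa] at h2
          omega
        · have hlt' : a' < a := by omega
          have hsp := hAsp a' haF' a haF hlt'
          have h1 := hf1 a' haF'
          have h2 := hf2 a haF
          have h3 := hL0 (f a' haF')
          rw [hfa] at h2
          omega
      calc A.card ≤ (Finset.univ : Finset (Fin t)).card :=
          Finset.card_le_card_of_injOn _ (fun a _ => Finset.mem_univ _) hinj
        _ = t := by simp
    -- build the disjoint cover from A
    set i := A.card with hi
    set aa : Fin i → ℕ := fun m => ((A.equivFin.symm m : A) : ℕ) with haa
    have haaA : ∀ m, aa m ∈ A := fun m => (A.equivFin.symm m).2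
    have haan : ∀ m, aa m < n := by
      intro m
      have := hAsub (haaA m)
      rw [hSline, Finset.mem_filter, Finset.mem_range] at this
      exact this.1
    have haainj : ∀ m m', m ≠ m' → aa m ≠ aa m' := by
      intro m m' hne heq
      exact hne (by
        have : (A.equivFin.symm m : A) = (A.equivFin.symm m' : A) := Subtype.ext heq
        exact A.equivFin.symm.injective this)
    refine ⟨i, hcardA, cover_to_decomp b i w
      (fun m => p + 1 + ((aa m : ℕ) : ZMod n)) (fun m => min b (n - aa m))
      (fun m => min_le_left _ _) ?_ ?_⟩
    · intro m m' hne
      ext j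
      simp only [Set.mem_inter_iff, Set.mem_empty_iff_false, iff_false]
      rintro ⟨⟨r, hr, hj1⟩, ⟨r', hr', hj2⟩⟩
      have h1 : ((aa m + r : ℕ) : ZMod n) = ((aa m' + r' : ℕ) : ZMod n) := by
        have heq : p + 1 + ((aa m : ℕ) : ZMod n) + (r : ZMod n)
            = p + 1 + ((aa m' : ℕ) : ZMod n) + (r' : ZMod n) := by rw [← hj1, ← hj2]
        rw [Nat.cast_add, Nat.cast_add]
        calc ((aa m : ℕ) : ZMod n) + (r : ZMod n)
            = (p + 1 + ((aa m : ℕ) : ZMod n) + (r : ZMod n)) - p - 1 := by ring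
          _ = (p + 1 + ((aa m' : ℕ) : ZMod n) + (r' : ZMod n)) - p - 1 := by rw [heq]
          _ = ((aa m' : ℕ) : ZMod n) + (r' : ZMod n) := by ring
      have h2 : aa m + r < n := by have := haan m; omega
      have h3 : aa m' + r' < n := by have := haan m'; omega
      have h4 := zmod_cast_inj h2 h3 h1
      have h5 := haainj m m' hne
      rcases Nat.lt_or_ge (aa m) (aa m') with hlt | hge
      · have := hAsp _ (haaA m) _ (haaA m') hlt
        omega
      · have hlt' : aa m' < aa m := by omega
        have := hAsp _ (haaA m') _ (haaA m) hlt'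
        omega
    · intro j hj
      set x := (j - p - 1).val with hx
      have hxn : x < n := ZMod.val_lt _
      have hjx : j = p + 1 + ((x : ℕ) : ZMod n) := by
        have : ((x : ℕ) : ZMod n) = j - p - 1 := ZMod.natCast_rightInverse _
        rw [this]; ring
      have hxS : x ∈ Sline := by
        rw [hSline, Finset.mem_filter, Finset.mem_range]
        exact ⟨hxn, by rw [← hjx]; exact hj⟩
      obtain ⟨a0, ha0A, ha0le, ha0lt⟩ := hAcov x hxS
      set m := A.equivFin ⟨a0, ha0A⟩ with hm
      have haam : aa m = a0 := by
        rw [haa, hm]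
        simp
      refine ⟨m, x - a0, ?_, ?_⟩
      · show x - a0 < min b (n - aa m)
        rw [haam]
        refine lt_min (by omega) (by omega)
      · have hsum2 : ((a0 : ℕ) : ZMod n) + ((x - a0 : ℕ) : ZMod n) = ((x : ℕ) : ZMod n) := by
          rw [← Nat.cast_add, Nat.add_sub_cancel' ha0le]
        show j = p + 1 + ((aa m : ℕ) : ZMod n) + ((x - a0 : ℕ) : ZMod n)
        rw [haam, hjx, ← hsum2]
        ring
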